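/- arXiv:math/0305155 — 2 statements merged into one kernel-verified Lean document; each statement's English description precedes it below -/
import Mathlib

section
/- Let p be a prime, and let D be an l×m integer matrix and D' be an m×n integer matrix with D·D' = 0 (so that mapping by D' followed by D gives a three-term cochain complex ℤⁿ → ℤᵐ → ℤˡ). Then the dimension over the field 𝔽_p = ℤ/pℤ of the cohomology ker(D_p)/im(D'_p) (where D_p, D'_p denote the entrywise reductions of D, D' modulo p, acting by matrix–vector multiplication on 𝔽_pᵐ and 𝔽_pⁿ) is greater than or equal to the dimension over ℚ of the cohomology ker(D_ℚ)/im(D'_ℚ) (where D_ℚ, D'_ℚ denote the entrywise casts of D, D' to ℚ). -/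
open Matrix

/-- The cohomology `ker A / im B` of a three-term complex of linear maps given by
matrices `A : K^m → K^l` and `B : K^n → K^m` (acting by matrix-vector multiplication). -/
abbrev matrixCohomology {K : Type*} [Field K] {l m n : ℕ}
    (A : Matrix (Fin l) (Fin m) K) (B : Matrix (Fin m) (Fin n) K) :=
  LinearMap.ker A.mulVecLin ⧸
    (LinearMap.range B.mulVecLin).comap (LinearMap.ker A.mulVecLin).subtype

/-- Coordinatewise integer cast as a `ℤ`-linear map. -/
def castLM {a : ℕ} (S : Type*) [Ring S] : (Fin a → ℤ) →ₗ[ℤ] (Fin a → S) where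
  toFun v := fun j => (v j : S)
  map_add' u v := by funext j; simp
  map_smul' z v := by funext j; simp [zsmul_eq_mul]

theorem li_cast_rat {a : ℕ} {ι : Type*} {v : ι → (Fin a → ℤ)} (hv : LinearIndependent ℤ v) :
    LinearIndependent ℚ (fun i => castLM ℚ (v i)) := by
  rw [linearIndependent_iff'] at hv ⊢
  intro t g hg i hi
  obtain ⟨b, hb⟩ := IsLocalization.exist_integer_multiples (nonZeroDivisors ℤ) t g
  choose! g' hg' using hb
  have hb0 : ((b : ℤ) : ℚ) ≠ 0 := by
    exact_mod_cast Int.cast_ne_zero.mpr (nonZeroDivisors.coe_ne_zero b)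
  have key : ∑ j ∈ t, g' j • v j = 0 := by
    funext k
    have h2 := congrFun hg k
    simp only [Finset.sum_apply, Pi.smul_apply, Pi.zero_apply, castLM,
      LinearMap.coe_mk, AddHom.coe_mk] at h2
    have cast0 : ((∑ j ∈ t, g' j • v j k : ℤ) : ℚ) = 0 := by
      push_cast [smul_eq_mul]
      calc ∑ j ∈ t, (g' j : ℚ) * (v j k : ℚ)
          = ∑ j ∈ t, ((b : ℤ) : ℚ) * (g j • (v j k : ℚ)) := by
            refine Finset.sum_congr rfl fun j hj => ?_
            have := hg' j hj
            simp only [algebraMap_int_eq, eq_intCast, Submonoid.smul_def, zsmul_eq_mul] at this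
            rw [smul_eq_mul, this]; ring
        _ = ((b : ℤ) : ℚ) * ∑ j ∈ t, g j • (v j k : ℚ) := by rw [Finset.mul_sum]
        _ = 0 := by rw [h2, mul_zero]
    have := Int.cast_injective (α := ℚ) cast0
    simpa using this
  have h3 := hv t g' key i hi
  have := hg' i hi
  rw [h3] at this
  simp only [algebraMap_int_eq, eq_intCast, Int.cast_zero, Submonoid.smul_def, zsmul_eq_mul] at this
  rcases mul_eq_zero.mp this.symm with h | h
  · exact absurd h hb0
  · exact h

theorem rank_zmod_le (p : ℕ) [Fact p.Prime] {a b : ℕ} (A : Matrix (Fin a) (Fin b) ℤ) :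
    (A.map ((↑) : ℤ → ZMod p)).rank ≤ (A.map ((↑) : ℤ → ℚ)).rank := by
  classical
  set L : Submodule ℤ (Fin a → ℤ) := LinearMap.range A.mulVecLin with hLdef
  haveI : Module.Finite ℤ L := Module.Finite.range A.mulVecLin
  haveI : Module.Free ℤ L := inferInstance
  set ι := Module.Free.ChooseBasisIndex ℤ L with hι
  set bas : Module.Basis ι ℤ L := Module.Free.chooseBasis ℤ L with hbas
  have hli : LinearIndependent ℤ (fun i : ι => (bas i : Fin a → ℤ)) :=
    bas.linearIndependent.map' L.subtype (Submodule.ker_subtype L)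
  have hliQ := li_cast_rat hli
  have hmemQ : ∀ i : ι, castLM ℚ (bas i : Fin a → ℤ) ∈
      LinearMap.range (A.map ((↑) : ℤ → ℚ)).mulVecLin := by
    intro i
    obtain ⟨x, hx⟩ := (bas i).2
    refine ⟨castLM ℚ x, ?_⟩
    funext k
    show ((A.map ⇑(Int.castRingHom ℚ)) *ᵥ (⇑(Int.castRingHom ℚ) ∘ x)) k = _
    rw [← RingHom.map_mulVec]
    simp only [castLM, LinearMap.coe_mk, AddHom.coe_mk, eq_intCast]
    rw [show A *ᵥ x = (bas i : Fin a → ℤ) from hx]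
  have ha : Fintype.card ι ≤ (A.map ((↑) : ℤ → ℚ)).rank := by
    rw [Matrix.rank]
    calc Fintype.card ι
        = Module.finrank ℚ (Submodule.span ℚ
            (Set.range fun i : ι => castLM ℚ (bas i : Fin a → ℤ))) :=
          (finrank_span_eq_card hliQ).symm
      _ ≤ _ := Submodule.finrank_mono (Submodule.span_le.mpr
          (by rintro _ ⟨i, rfl⟩; exact hmemQ i))
  refine le_trans ?_ ha
  rw [Matrix.rank]
  have hle : LinearMap.range (A.map ((↑) : ℤ → ZMod p)).mulVecLin ≤
      Submodule.span (ZMod p)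
        (Set.range fun i : ι => castLM (ZMod p) (bas i : Fin a → ℤ)) := by
    rw [Matrix.range_mulVecLin, Submodule.span_le]
    rintro _ ⟨j, rfl⟩
    have hcol : Aᵀ j ∈ L := ⟨Pi.single j 1, by
      simp only [Matrix.mulVecLin_apply, Matrix.mulVec_single_one]; rfl⟩
    have hrepr := bas.sum_repr ⟨Aᵀ j, hcol⟩
    set ρ : L →ₗ[ℤ] (Fin a → ZMod p) := (castLM (ZMod p)).comp L.subtype with hρ
    set c := bas.repr ⟨Aᵀ j, hcol⟩ with hc
    have h2 : (A.map ((↑) : ℤ → ZMod p))ᵀ j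
        = ∑ i, c i • ρ (bas i) := by
      have h3 : (A.map ((↑) : ℤ → ZMod p))ᵀ j = ρ ⟨Aᵀ j, hcol⟩ := by
        funext k; rfl
      rw [h3]
      conv_lhs => rw [← hrepr]
      rw [map_sum]
      simp only [_root_.map_smul]
    rw [show (A.map ((↑) : ℤ → ZMod p)).col j = _ from h2]
    refine Submodule.sum_mem _ fun i _ => ?_
    rw [← Int.cast_smul_eq_zsmul (ZMod p)]
    exact Submodule.smul_mem _ _ (Submodule.subset_span ⟨i, rfl⟩)
  calc Module.finrank (ZMod p) ↥(LinearMap.range (A.map ((↑) : ℤ → ZMod p)).mulVecLin)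
      ≤ Module.finrank (ZMod p) (Submodule.span (ZMod p)
          (Set.range fun i : ι => castLM (ZMod p) (bas i : Fin a → ℤ))) :=
        Submodule.finrank_mono hle
    _ ≤ Fintype.card ι := finrank_range_le_card _

theorem coh_finrank {K : Type*} [Field K] {l m n : ℕ}
    (A : Matrix (Fin l) (Fin m) K) (B : Matrix (Fin m) (Fin n) K) (h : A * B = 0) :
    Module.finrank K (matrixCohomology A B) = m - A.rank - B.rank := by
  have hAB : LinearMap.range B.mulVecLin ≤ LinearMap.ker A.mulVecLin := by
    rintro _ ⟨x, rfl⟩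
    rw [LinearMap.mem_ker, ← LinearMap.comp_apply, ← Matrix.mulVecLin_mul, h,
      Matrix.mulVecLin_zero, LinearMap.zero_apply]
  have e1 : Module.finrank K (matrixCohomology A B) + Module.finrank K
      ((LinearMap.range B.mulVecLin).comap (LinearMap.ker A.mulVecLin).subtype)
      = Module.finrank K (LinearMap.ker A.mulVecLin) :=
    Submodule.finrank_quotient_add_finrank
      ((LinearMap.range B.mulVecLin).comap (LinearMap.ker A.mulVecLin).subtype)
  have e2 : Module.finrank K
      ((LinearMap.range B.mulVecLin).comap (LinearMap.ker A.mulVecLin).subtype) = B.rank :=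
    LinearEquiv.finrank_eq (Submodule.comapSubtypeEquivOfLe hAB)
  have e3 := LinearMap.finrank_range_add_finrank_ker A.mulVecLin
  rw [Module.finrank_pi] at e3
  simp only [Fintype.card_fin] at e3
  have hA : Module.finrank K (LinearMap.range A.mulVecLin) = A.rank := rfl
  omega

/-- For an integer three-term complex `ℤⁿ → ℤᵐ → ℤˡ` given by `D·D' = 0`, the dimension
of the cohomology over `𝔽_p` is at least the dimension of the cohomology over `ℚ`. -/
theorem modular_cohomology_dim_ge (p : ℕ) [Fact p.Prime] {l m n : ℕ}
    (D : Matrix (Fin l) (Fin m) ℤ) (D' : Matrix (Fin m) (Fin n) ℤ)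
    (h : D * D' = 0) :
    Module.finrank ℚ
        (matrixCohomology (D.map (Int.cast : ℤ → ℚ)) (D'.map (Int.cast : ℤ → ℚ))) ≤
      Module.finrank (ZMod p)
        (matrixCohomology (D.map (Int.cast : ℤ → ZMod p))
          (D'.map (Int.cast : ℤ → ZMod p))) := by
  have hq : D.map (Int.cast : ℤ → ℚ) * D'.map (Int.cast : ℤ → ℚ) = 0 := by
    show D.map ⇑(Int.castRingHom ℚ) * D'.map ⇑(Int.castRingHom ℚ) = 0
    rw [← Matrix.map_mul, h]
    ext i j; simp
  have hp' : D.map (Int.cast : ℤ → ZMod p) * D'.map (Int.cast : ℤ → ZMod p) = 0 := by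
    show D.map ⇑(Int.castRingHom (ZMod p)) * D'.map ⇑(Int.castRingHom (ZMod p)) = 0
    rw [← Matrix.map_mul, h]
    ext i j; simp
  rw [coh_finrank _ _ hq, coh_finrank _ _ hp']
  have h1 := rank_zmod_le p D
  have h2 := rank_zmod_le p D'
  omega
end

section
/- Let p be a prime, and let D be an l×m integer matrix and D' be an m×n integer matrix with D·D' = 0. If the cohomology ker(D_p)/im(D'_p) over 𝔽_p = ℤ/pℤ is the zero space, then the cohomology ker(D_ℚ)/im(D'_ℚ) over ℚ is also the zero space. (Equivalently: non-trivial rational cohomology classes can exist only where the modular cohomology is non-trivial.) -/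
open Matrix

/-- Integer vectors whose reductions mod `p` are linearly independent are
linearly independent over `ℤ`. -/
lemma int_linearIndependent_of_zmod (p : ℕ) [hp : Fact p.Prime] {m : ℕ} {ι : Type*}
    (u : ι → Fin m → ℤ)
    (hu : LinearIndependent (ZMod p) (fun j i => ((u j i : ZMod p)))) :
    LinearIndependent ℤ u := by
  rw [linearIndependent_iff'] at hu ⊢
  intro s g hsum i hi
  have key : ∀ k : ℕ, ∀ j ∈ s, (p : ℤ) ^ k ∣ g j := by
    intro k
    induction k with
    | zero => intro j _; simp
    | succ k ih =>
      have hpk : ((p : ℤ) ^ k) ≠ 0 := pow_ne_zero _ (by exact_mod_cast hp.out.ne_zero)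
      have h1 : ∑ j ∈ s, (g j / (p : ℤ) ^ k) • u j = 0 := by
        have h0 : ((p : ℤ) ^ k) • ∑ j ∈ s, (g j / (p : ℤ) ^ k) • u j
            = ((p : ℤ) ^ k) • (0 : Fin m → ℤ) := by
          rw [Finset.smul_sum, smul_zero, ← hsum]
          refine Finset.sum_congr rfl fun j hj => ?_
          rw [smul_smul, Int.mul_ediv_cancel' (ih j hj)]
        exact smul_right_injective (Fin m → ℤ) hpk h0
      have h2 : ∑ j ∈ s, ((g j / (p : ℤ) ^ k : ℤ) : ZMod p) • (fun i => ((u j i : ZMod p))) = 0 := by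
        funext i
        have h3 := congrFun h1 i
        simp only [Finset.sum_apply, Pi.smul_apply, smul_eq_mul, Pi.zero_apply] at h3 ⊢
        have h4 := congrArg (Int.cast : ℤ → ZMod p) h3
        push_cast at h4
        exact h4
      intro j hj
      have h5 := hu s (fun j => ((g j / (p : ℤ) ^ k : ℤ) : ZMod p)) h2 j hj
      rw [ZMod.intCast_zmod_eq_zero_iff_dvd] at h5
      have h6 : g j = (p : ℤ) ^ k * (g j / (p : ℤ) ^ k) := (Int.mul_ediv_cancel' (ih j hj)).symm
      rw [pow_succ, h6]
      exact mul_dvd_mul_left _ h5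
  by_contra hne
  set k := (g i).natAbs with hk
  have h7 : (p : ℤ) ^ k ∣ (g i) := key k i hi
  have h8 : p ^ k ∣ (g i).natAbs := by
    have h8' := Int.natAbs_dvd_natAbs.mpr h7
    simpa [Int.natAbs_pow] using h8'
  have h9 : p ^ k ≤ (g i).natAbs :=
    Nat.le_of_dvd (Int.natAbs_pos.mpr hne) h8
  have h10 : k < p ^ k := Nat.lt_pow_self (n := k) hp.out.one_lt
  omega

/-- The rank of an integer matrix reduced mod `p` is at most its rank over `ℚ`. -/
lemma rank_zmod_le_rank_rat (p : ℕ) [hp : Fact p.Prime] {a b : ℕ}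
    (M : Matrix (Fin a) (Fin b) ℤ) :
    (M.map (Int.cast : ℤ → ZMod p)).rank ≤ (M.map (Int.cast : ℤ → ℚ)).rank := by
  classical
  set Ap := M.map (Int.cast : ℤ → ZMod p) with hAp
  set Aq := M.map (Int.cast : ℤ → ℚ) with hAq
  obtain ⟨t, hsub, hspan, hind⟩ := exists_linearIndependent (ZMod p) (Set.range Apᵀ)
  have htfin : t.Finite := (Set.finite_range Apᵀ).subset hsub
  haveI : Fintype t := htfin.fintype
  -- choose indices
  have hchoice : ∀ x : t, ∃ j : Fin b, Apᵀ j = (x : Fin a → ZMod p) := fun x => hsub x.2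
  choose gi hgi using hchoice
  -- the integer columns indexed by gi
  set u : t → Fin a → ℤ := fun x i => M i (gi x) with hu
  have hmodeq : (fun x i => ((u x i : ZMod p))) = fun x : t => (x : Fin a → ZMod p) := by
    funext x i
    rw [← hgi x]
    rfl
  have hindu : LinearIndependent (ZMod p) (fun x i => ((u x i : ZMod p))) := by
    rw [hmodeq]; exact hind
  have hZ : LinearIndependent ℤ u := int_linearIndependent_of_zmod p u hindu
  -- cast to ℚ
  let c : (Fin a → ℤ) →ₗ[ℤ] (Fin a → ℚ) :=
    LinearMap.pi fun i => (Int.castAddHom ℚ).toIntLinearMap.comp (LinearMap.proj i)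
  have hcinj : LinearMap.ker c = ⊥ := by
    rw [LinearMap.ker_eq_bot]
    intro x y hxy
    funext i
    have hxyi : ((x i : ℚ)) = ((y i : ℚ)) := congrFun hxy i
    exact_mod_cast hxyi
  have hZq : LinearIndependent ℤ (fun x : t => (fun i => ((u x i : ℚ)))) := by
    have := hZ.map' c hcinj
    exact this
  have hQ : LinearIndependent ℚ (fun x : t => (fun i => ((u x i : ℚ)))) :=
    (LinearIndependent.iff_fractionRing ℤ ℚ).mp hZq
  -- relate to columns of Aq
  have hcols : (fun x : t => (fun i => ((u x i : ℚ)))) = fun x : t => Aqᵀ (gi x) := by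
    funext x i; rfl
  rw [rank_eq_finrank_span_cols, rank_eq_finrank_span_cols]
  change Module.finrank (ZMod p) (Submodule.span (ZMod p) (Set.range Apᵀ)) ≤ Module.finrank ℚ (Submodule.span ℚ (Set.range Aqᵀ))
  have e1 : Module.finrank (ZMod p) (Submodule.span (ZMod p) (Set.range Apᵀ)) = Fintype.card t := by
    have e1' := finrank_span_eq_card hind
    rw [Subtype.range_coe] at e1'
    rw [← hspan]
    exact e1'
  rw [e1]
  have e2 : Fintype.card t
      = Module.finrank ℚ (Submodule.span ℚ (Set.range (fun x : t => Aqᵀ (gi x)))) := by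
    rw [finrank_span_eq_card (hcols ▸ hQ)]
  rw [e2]
  apply Submodule.finrank_mono
  apply Submodule.span_mono
  rintro _ ⟨x, rfl⟩
  exact ⟨gi x, rfl⟩

/-- If the cohomology of the reduction mod `p` of an integer three-term complex is the zero
space, then the cohomology of the complex over `ℚ` is also the zero space. -/
theorem rational_cohomology_trivial_of_modular_trivial (p : ℕ) [Fact p.Prime] {l m n : ℕ}
    (D : Matrix (Fin l) (Fin m) ℤ) (D' : Matrix (Fin m) (Fin n) ℤ)
    (h : D * D' = 0)
    (hp : Subsingleton
      (matrixCohomology (D.map (Int.cast : ℤ → ZMod p)) (D'.map (Int.cast : ℤ → ZMod p)))) :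
    Subsingleton
      (matrixCohomology (D.map (Int.cast : ℤ → ℚ)) (D'.map (Int.cast : ℤ → ℚ))) := by
  classical
  set Dp := D.map (Int.cast : ℤ → ZMod p)
  set D'p := D'.map (Int.cast : ℤ → ZMod p)
  set Dq := D.map (Int.cast : ℤ → ℚ)
  set D'q := D'.map (Int.cast : ℤ → ℚ)
  have hmulp : Dp * D'p = 0 := by
    ext i j
    have h0 : (∑ k, D i k * D' k j) = 0 := by
      simpa [Matrix.mul_apply] using congrFun (congrFun h i) j
    have h1 := congrArg (Int.cast : ℤ → ZMod p) h0
    push_cast at h1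
    simpa [Matrix.mul_apply, Matrix.map_apply, Dp, D'p] using h1
  have hmulq : Dq * D'q = 0 := by
    ext i j
    have h0 : (∑ k, D i k * D' k j) = 0 := by
      simpa [Matrix.mul_apply] using congrFun (congrFun h i) j
    have h1 := congrArg (Int.cast : ℤ → ℚ) h0
    push_cast at h1
    simpa [Matrix.mul_apply, Matrix.map_apply, Dq, D'q] using h1
  -- range ≤ ker over ℚ
  have hrangeq : LinearMap.range D'q.mulVecLin ≤ LinearMap.ker Dq.mulVecLin := by
    rw [LinearMap.range_le_ker_iff, ← Matrix.mulVecLin_mul, hmulq, Matrix.mulVecLin_zero]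
  -- mod p hypothesis: ker ≤ range
  have hkerp : LinearMap.ker Dp.mulVecLin ≤ LinearMap.range D'p.mulVecLin := by
    rw [matrixCohomology, Submodule.Quotient.subsingleton_iff,
      Submodule.comap_subtype_eq_top] at hp
    exact hp
  rw [matrixCohomology, Submodule.Quotient.subsingleton_iff,
    Submodule.comap_subtype_eq_top]
  -- rank bookkeeping
  have rnq := LinearMap.finrank_range_add_finrank_ker Dq.mulVecLin
  have rnp := LinearMap.finrank_range_add_finrank_ker Dp.mulVecLin
  rw [Module.finrank_fintype_fun_eq_card, Fintype.card_fin] at rnq rnp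
  have hD : Dp.rank ≤ Dq.rank := rank_zmod_le_rank_rat p D
  have hD' : D'p.rank ≤ D'q.rank := rank_zmod_le_rank_rat p D'
  have hkfp : Module.finrank (ZMod p) (LinearMap.ker Dp.mulVecLin) ≤ D'p.rank :=
    Submodule.finrank_mono hkerp
  have hrkq : Module.finrank ℚ (LinearMap.ker Dq.mulVecLin)
      ≤ Module.finrank ℚ (LinearMap.range D'q.mulVecLin) := by
    change _ ≤ D'q.rank
    have : Dq.rank + Module.finrank ℚ (LinearMap.ker Dq.mulVecLin) = m := rnq
    have : Dp.rank + Module.finrank (ZMod p) (LinearMap.ker Dp.mulVecLin) = m := rnp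
    unfold Matrix.rank at *
    omega
  exact (Submodule.eq_of_le_of_finrank_le hrangeq hrkq).ge
end
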